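/- arXiv:2408.00831 — 5 statements merged into one kernel-verified Lean document; each statement's English description precedes it below -/
import Mathlib

section
/- Upper bound in Theorem 3 (achievability via the finite Vaidman scheme): The rank-one projective POVM {|ψ_c⟩⟨ψ_c|}_{c=1,…,4}, where ψ_1,…,ψ_4 are the columns of the unitary M_EJM, is 3-ebit localizable. -/
open Matrix Complex Kronecker
open scoped ComplexOrder

noncomputable section

/-- The identification of `Fin 2 × Fin 2` with `Fin 4`, ordering pairs as 00,01,10,11. -/
def pairEquiv : Fin 2 × Fin 2 ≃ Fin 4 where
  toFun p := ⟨2 * p.1.val + p.2.val, by have h1 := p.1.isLt; have h2 := p.2.isLt; omega⟩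
  invFun k := (⟨k.val / 2, by have := k.isLt; omega⟩, ⟨k.val % 2, by omega⟩)
  left_inv := by decide
  right_inv := by decide

/-- Kronecker product of two 2×2 matrices, as a 4×4 matrix indexed by `Fin 4`
with the ordering 00,01,10,11. -/
def kron (A B : Matrix (Fin 2) (Fin 2) ℂ) : Matrix (Fin 4) (Fin 4) ℂ :=
  Matrix.reindex pairEquiv pairEquiv (A ⊗ₖ B)

def σX : Matrix (Fin 2) (Fin 2) ℂ := !![0, 1; 1, 0]
def σY : Matrix (Fin 2) (Fin 2) ℂ := !![0, -Complex.I; Complex.I, 0]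
def σZ : Matrix (Fin 2) (Fin 2) ℂ := !![1, 0; 0, -1]

/-- The Pauli matrices indexed as σ₀ = I₂, σ₁ = σ_X, σ₂ = σ_Y, σ₃ = σ_Z. -/
def pauli (a : Fin 4) : Matrix (Fin 2) (Fin 2) ℂ :=
  if a = 0 then 1 else if a = 1 then σX else if a = 2 then σY else σZ

/-- A 4×4 complex matrix is a permutation matrix with phases if there is a permutation
`π` of the indices and unit-modulus phases `φ j` with `P (π j) j = φ j` and all other
entries zero. -/
def PermPhase (P : Matrix (Fin 4) (Fin 4) ℂ) : Prop :=
  ∃ (π : Equiv.Perm (Fin 4)) (φ : Fin 4 → ℂ),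
    (∀ j, ‖φ j‖ = 1) ∧ ∀ i j, P i j = if i = π j then φ j else 0

/-- The partial-trace map `T(A,B)` over the `n`-ebit ancillas:
`T(A,B)_{(i,j),(i',j')} = 2^{-n} ∑_{l,k} A_{(i,l),(i',k)} · B_{(j,l),(j',k)}`. -/
def Tmap (n : ℕ)
    (A B : Matrix (Fin 2 × Fin (2 ^ n)) (Fin 2 × Fin (2 ^ n)) ℂ) :
    Matrix (Fin 2 × Fin 2) (Fin 2 × Fin 2) ℂ :=
  Matrix.of fun p q =>
    ((2 : ℂ) ^ n)⁻¹ * ∑ l : Fin (2 ^ n), ∑ k : Fin (2 ^ n),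
      A (p.1, l) (q.1, k) * B (p.2, l) (q.2, k)

/-- A POVM `Msr` on ℂ²⊗ℂ² is `n`-ebit localizable if there are finite local POVMs
`A` and `B` on system ⊗ ancilla and a classical post-processing `p(c|a,b)` reproducing
all POVM elements via the shared state `(φ⁺)^{⊗n}`. -/
def NEbitLocalizable (n : ℕ) {C : Type} [Fintype C]
    (Msr : C → Matrix (Fin 2 × Fin 2) (Fin 2 × Fin 2) ℂ) : Prop :=
  ∃ (nA nB : ℕ)
    (A : Fin nA → Matrix (Fin 2 × Fin (2 ^ n)) (Fin 2 × Fin (2 ^ n)) ℂ)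
    (B : Fin nB → Matrix (Fin 2 × Fin (2 ^ n)) (Fin 2 × Fin (2 ^ n)) ℂ)
    (p : C → Fin nA → Fin nB → ℝ),
    (∀ a, (A a).PosSemidef) ∧ (∑ a, A a = 1) ∧
    (∀ b, (B b).PosSemidef) ∧ (∑ b, B b = 1) ∧
    (∀ c a b, 0 ≤ p c a b ∧ p c a b ≤ 1) ∧
    (∀ a b, ∑ c, p c a b = 1) ∧
    (∀ c, Msr c = ∑ a, ∑ b, (p c a b : ℂ) • Tmap n (A a) (B b))

/-- The rank-one projective POVM whose elements are the projectors onto the columns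
of the unitary `M`. -/
def projPOVM (M : Matrix (Fin 4) (Fin 4) ℂ) (c : Fin 4) :
    Matrix (Fin 2 × Fin 2) (Fin 2 × Fin 2) ℂ :=
  Matrix.of fun p q => M (pairEquiv p) c * star (M (pairEquiv q) c)

/-- The elegant joint measurement. -/
def M_EJM : Matrix (Fin 4) (Fin 4) ℂ :=
  ((Real.sqrt 8 : ℂ))⁻¹ •
    !![1 + Complex.I, -1 + Complex.I, 1 - Complex.I, -1 - Complex.I;
       -(2 * Complex.I), 0, 0, -(2 * Complex.I);
       0, 2 * Complex.I, 2 * Complex.I, 0;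
       1 - Complex.I, -1 - Complex.I, 1 + Complex.I, -1 + Complex.I]



namespace EJM3

open GaussianInt

def kop : Fin 4 → Fin 4 → Fin 4 := ![![0, 1, 2, 3], ![1, 0, 3, 2], ![2, 3, 0, 1], ![3, 2, 1, 0]]

def sgT : Fin 4 → Fin 2 → Fin 2 → GaussianInt := ![![![(⟨1, 0⟩ : GaussianInt), (⟨0, 0⟩ : GaussianInt)], ![(⟨0, 0⟩ : GaussianInt), (⟨1, 0⟩ : GaussianInt)]],
  ![![(⟨0, 0⟩ : GaussianInt), (⟨1, 0⟩ : GaussianInt)], ![(⟨1, 0⟩ : GaussianInt), (⟨0, 0⟩ : GaussianInt)]],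
  ![![(⟨0, 0⟩ : GaussianInt), (⟨0, -1⟩ : GaussianInt)], ![(⟨0, 1⟩ : GaussianInt), (⟨0, 0⟩ : GaussianInt)]],
  ![![(⟨1, 0⟩ : GaussianInt), (⟨0, 0⟩ : GaussianInt)], ![(⟨0, 0⟩ : GaussianInt), (⟨-1, 0⟩ : GaussianInt)]]]

def epsT : Fin 4 → Fin 4 → GaussianInt := ![![(⟨1, 0⟩ : GaussianInt), (⟨0, -1⟩ : GaussianInt), (⟨1, 0⟩ : GaussianInt), (⟨0, 1⟩ : GaussianInt)],
  ![(⟨-1, 0⟩ : GaussianInt), (⟨0, 1⟩ : GaussianInt), (⟨1, 0⟩ : GaussianInt), (⟨0, 1⟩ : GaussianInt)],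
  ![(⟨1, 0⟩ : GaussianInt), (⟨0, 1⟩ : GaussianInt), (⟨1, 0⟩ : GaussianInt), (⟨0, -1⟩ : GaussianInt)],
  ![(⟨-1, 0⟩ : GaussianInt), (⟨0, -1⟩ : GaussianInt), (⟨1, 0⟩ : GaussianInt), (⟨0, -1⟩ : GaussianInt)]]

def thT : Fin 4 → Fin 4 → Fin 4 → GaussianInt := ![![![(⟨1, 0⟩ : GaussianInt), (⟨1, 0⟩ : GaussianInt), (⟨1, 0⟩ : GaussianInt), (⟨1, 0⟩ : GaussianInt)], ![(⟨1, 0⟩ : GaussianInt), (⟨1, 0⟩ : GaussianInt), (⟨-1, 0⟩ : GaussianInt), (⟨-1, 0⟩ : GaussianInt)], ![(⟨1, 0⟩ : GaussianInt), (⟨-1, 0⟩ : GaussianInt), (⟨1, 0⟩ : GaussianInt), (⟨-1, 0⟩ : GaussianInt)], ![(⟨1, 0⟩ : GaussianInt), (⟨-1, 0⟩ : GaussianInt), (⟨-1, 0⟩ : GaussianInt), (⟨1, 0⟩ : GaussianInt)]],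
  ![![(⟨1, 0⟩ : GaussianInt), (⟨1, 0⟩ : GaussianInt), (⟨0, 1⟩ : GaussianInt), (⟨0, -1⟩ : GaussianInt)], ![(⟨1, 0⟩ : GaussianInt), (⟨1, 0⟩ : GaussianInt), (⟨0, -1⟩ : GaussianInt), (⟨0, 1⟩ : GaussianInt)], ![(⟨1, 0⟩ : GaussianInt), (⟨-1, 0⟩ : GaussianInt), (⟨0, 1⟩ : GaussianInt), (⟨0, 1⟩ : GaussianInt)], ![(⟨1, 0⟩ : GaussianInt), (⟨-1, 0⟩ : GaussianInt), (⟨0, -1⟩ : GaussianInt), (⟨0, -1⟩ : GaussianInt)]],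
  ![![(⟨1, 0⟩ : GaussianInt), (⟨0, 1⟩ : GaussianInt), (⟨1, 0⟩ : GaussianInt), (⟨0, -1⟩ : GaussianInt)], ![(⟨1, 0⟩ : GaussianInt), (⟨0, 1⟩ : GaussianInt), (⟨-1, 0⟩ : GaussianInt), (⟨0, 1⟩ : GaussianInt)], ![(⟨1, 0⟩ : GaussianInt), (⟨0, -1⟩ : GaussianInt), (⟨1, 0⟩ : GaussianInt), (⟨0, 1⟩ : GaussianInt)], ![(⟨1, 0⟩ : GaussianInt), (⟨0, -1⟩ : GaussianInt), (⟨-1, 0⟩ : GaussianInt), (⟨0, -1⟩ : GaussianInt)]],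
  ![![(⟨1, 0⟩ : GaussianInt), (⟨0, 1⟩ : GaussianInt), (⟨0, 1⟩ : GaussianInt), (⟨-1, 0⟩ : GaussianInt)], ![(⟨1, 0⟩ : GaussianInt), (⟨0, 1⟩ : GaussianInt), (⟨0, -1⟩ : GaussianInt), (⟨1, 0⟩ : GaussianInt)], ![(⟨1, 0⟩ : GaussianInt), (⟨0, -1⟩ : GaussianInt), (⟨0, 1⟩ : GaussianInt), (⟨1, 0⟩ : GaussianInt)], ![(⟨1, 0⟩ : GaussianInt), (⟨0, -1⟩ : GaussianInt), (⟨0, -1⟩ : GaussianInt), (⟨-1, 0⟩ : GaussianInt)]]]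

def Gt : Fin 4 → Fin 4 → GaussianInt := ![![(⟨1, 1⟩ : GaussianInt), (⟨-1, 1⟩ : GaussianInt), (⟨1, -1⟩ : GaussianInt), (⟨-1, -1⟩ : GaussianInt)],
  ![(⟨0, -2⟩ : GaussianInt), (⟨0, 0⟩ : GaussianInt), (⟨0, 0⟩ : GaussianInt), (⟨0, -2⟩ : GaussianInt)],
  ![(⟨0, 0⟩ : GaussianInt), (⟨0, 2⟩ : GaussianInt), (⟨0, 2⟩ : GaussianInt), (⟨0, 0⟩ : GaussianInt)],
  ![(⟨1, -1⟩ : GaussianInt), (⟨-1, -1⟩ : GaussianInt), (⟨1, 1⟩ : GaussianInt), (⟨-1, 1⟩ : GaussianInt)]]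

def fT : Fin 16 → Fin 16 → Fin 4 := ![![0, 1, 2, 3, 2, 3, 0, 1, 2, 3, 0, 1, 3, 2, 1, 0],
  ![1, 0, 3, 2, 3, 2, 1, 0, 3, 2, 1, 0, 2, 3, 0, 1],
  ![2, 3, 0, 1, 0, 1, 2, 3, 0, 1, 2, 3, 1, 0, 3, 2],
  ![3, 2, 1, 0, 1, 0, 3, 2, 1, 0, 3, 2, 0, 1, 2, 3],
  ![3, 2, 1, 0, 0, 1, 2, 3, 2, 3, 0, 1, 2, 3, 0, 1],
  ![2, 3, 0, 1, 1, 0, 3, 2, 3, 2, 1, 0, 3, 2, 1, 0],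
  ![1, 0, 3, 2, 2, 3, 0, 1, 0, 1, 2, 3, 0, 1, 2, 3],
  ![0, 1, 2, 3, 3, 2, 1, 0, 1, 0, 3, 2, 1, 0, 3, 2],
  ![2, 3, 0, 1, 3, 2, 1, 0, 2, 3, 0, 1, 0, 1, 2, 3],
  ![3, 2, 1, 0, 2, 3, 0, 1, 3, 2, 1, 0, 1, 0, 3, 2],
  ![0, 1, 2, 3, 1, 0, 3, 2, 0, 1, 2, 3, 2, 3, 0, 1],
  ![1, 0, 3, 2, 0, 1, 2, 3, 1, 0, 3, 2, 3, 2, 1, 0],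
  ![1, 0, 3, 2, 1, 0, 3, 2, 2, 3, 0, 1, 1, 0, 3, 2],
  ![0, 1, 2, 3, 0, 1, 2, 3, 3, 2, 1, 0, 0, 1, 2, 3],
  ![3, 2, 1, 0, 3, 2, 1, 0, 0, 1, 2, 3, 3, 2, 1, 0],
  ![2, 3, 0, 1, 2, 3, 0, 1, 1, 0, 3, 2, 2, 3, 0, 1]]

def zT : Fin 16 → Fin 16 → GaussianInt := ![![(⟨1, 0⟩ : GaussianInt), (⟨-1, 0⟩ : GaussianInt), (⟨1, 0⟩ : GaussianInt), (⟨-1, 0⟩ : GaussianInt), (⟨0, -1⟩ : GaussianInt), (⟨0, 1⟩ : GaussianInt), (⟨0, -1⟩ : GaussianInt), (⟨0, 1⟩ : GaussianInt), (⟨-1, 0⟩ : GaussianInt), (⟨1, 0⟩ : GaussianInt), (⟨-1, 0⟩ : GaussianInt), (⟨1, 0⟩ : GaussianInt), (⟨0, -1⟩ : GaussianInt), (⟨0, 1⟩ : GaussianInt), (⟨0, -1⟩ : GaussianInt), (⟨0, 1⟩ : GaussianInt)],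
  ![(⟨1, 0⟩ : GaussianInt), (⟨-1, 0⟩ : GaussianInt), (⟨1, 0⟩ : GaussianInt), (⟨-1, 0⟩ : GaussianInt), (⟨0, -1⟩ : GaussianInt), (⟨0, 1⟩ : GaussianInt), (⟨0, -1⟩ : GaussianInt), (⟨0, 1⟩ : GaussianInt), (⟨1, 0⟩ : GaussianInt), (⟨-1, 0⟩ : GaussianInt), (⟨1, 0⟩ : GaussianInt), (⟨-1, 0⟩ : GaussianInt), (⟨0, 1⟩ : GaussianInt), (⟨0, -1⟩ : GaussianInt), (⟨0, 1⟩ : GaussianInt), (⟨0, -1⟩ : GaussianInt)],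
  ![(⟨1, 0⟩ : GaussianInt), (⟨-1, 0⟩ : GaussianInt), (⟨1, 0⟩ : GaussianInt), (⟨-1, 0⟩ : GaussianInt), (⟨0, 1⟩ : GaussianInt), (⟨0, -1⟩ : GaussianInt), (⟨0, 1⟩ : GaussianInt), (⟨0, -1⟩ : GaussianInt), (⟨-1, 0⟩ : GaussianInt), (⟨1, 0⟩ : GaussianInt), (⟨-1, 0⟩ : GaussianInt), (⟨1, 0⟩ : GaussianInt), (⟨0, 1⟩ : GaussianInt), (⟨0, -1⟩ : GaussianInt), (⟨0, 1⟩ : GaussianInt), (⟨0, -1⟩ : GaussianInt)],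
  ![(⟨1, 0⟩ : GaussianInt), (⟨-1, 0⟩ : GaussianInt), (⟨1, 0⟩ : GaussianInt), (⟨-1, 0⟩ : GaussianInt), (⟨0, 1⟩ : GaussianInt), (⟨0, -1⟩ : GaussianInt), (⟨0, 1⟩ : GaussianInt), (⟨0, -1⟩ : GaussianInt), (⟨1, 0⟩ : GaussianInt), (⟨-1, 0⟩ : GaussianInt), (⟨1, 0⟩ : GaussianInt), (⟨-1, 0⟩ : GaussianInt), (⟨0, -1⟩ : GaussianInt), (⟨0, 1⟩ : GaussianInt), (⟨0, -1⟩ : GaussianInt), (⟨0, 1⟩ : GaussianInt)],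
  ![(⟨0, 1⟩ : GaussianInt), (⟨0, -1⟩ : GaussianInt), (⟨0, -1⟩ : GaussianInt), (⟨0, 1⟩ : GaussianInt), (⟨1, 0⟩ : GaussianInt), (⟨-1, 0⟩ : GaussianInt), (⟨-1, 0⟩ : GaussianInt), (⟨1, 0⟩ : GaussianInt), (⟨1, 0⟩ : GaussianInt), (⟨-1, 0⟩ : GaussianInt), (⟨-1, 0⟩ : GaussianInt), (⟨1, 0⟩ : GaussianInt), (⟨0, 1⟩ : GaussianInt), (⟨0, -1⟩ : GaussianInt), (⟨0, -1⟩ : GaussianInt), (⟨0, 1⟩ : GaussianInt)],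
  ![(⟨0, 1⟩ : GaussianInt), (⟨0, -1⟩ : GaussianInt), (⟨0, -1⟩ : GaussianInt), (⟨0, 1⟩ : GaussianInt), (⟨1, 0⟩ : GaussianInt), (⟨-1, 0⟩ : GaussianInt), (⟨-1, 0⟩ : GaussianInt), (⟨1, 0⟩ : GaussianInt), (⟨-1, 0⟩ : GaussianInt), (⟨1, 0⟩ : GaussianInt), (⟨1, 0⟩ : GaussianInt), (⟨-1, 0⟩ : GaussianInt), (⟨0, -1⟩ : GaussianInt), (⟨0, 1⟩ : GaussianInt), (⟨0, 1⟩ : GaussianInt), (⟨0, -1⟩ : GaussianInt)],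
  ![(⟨0, -1⟩ : GaussianInt), (⟨0, 1⟩ : GaussianInt), (⟨0, 1⟩ : GaussianInt), (⟨0, -1⟩ : GaussianInt), (⟨1, 0⟩ : GaussianInt), (⟨-1, 0⟩ : GaussianInt), (⟨-1, 0⟩ : GaussianInt), (⟨1, 0⟩ : GaussianInt), (⟨-1, 0⟩ : GaussianInt), (⟨1, 0⟩ : GaussianInt), (⟨1, 0⟩ : GaussianInt), (⟨-1, 0⟩ : GaussianInt), (⟨0, 1⟩ : GaussianInt), (⟨0, -1⟩ : GaussianInt), (⟨0, -1⟩ : GaussianInt), (⟨0, 1⟩ : GaussianInt)],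
  ![(⟨0, -1⟩ : GaussianInt), (⟨0, 1⟩ : GaussianInt), (⟨0, 1⟩ : GaussianInt), (⟨0, -1⟩ : GaussianInt), (⟨1, 0⟩ : GaussianInt), (⟨-1, 0⟩ : GaussianInt), (⟨-1, 0⟩ : GaussianInt), (⟨1, 0⟩ : GaussianInt), (⟨1, 0⟩ : GaussianInt), (⟨-1, 0⟩ : GaussianInt), (⟨-1, 0⟩ : GaussianInt), (⟨1, 0⟩ : GaussianInt), (⟨0, -1⟩ : GaussianInt), (⟨0, 1⟩ : GaussianInt), (⟨0, 1⟩ : GaussianInt), (⟨0, -1⟩ : GaussianInt)],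
  ![(⟨1, 0⟩ : GaussianInt), (⟨1, 0⟩ : GaussianInt), (⟨1, 0⟩ : GaussianInt), (⟨1, 0⟩ : GaussianInt), (⟨1, 0⟩ : GaussianInt), (⟨1, 0⟩ : GaussianInt), (⟨1, 0⟩ : GaussianInt), (⟨1, 0⟩ : GaussianInt), (⟨-1, 0⟩ : GaussianInt), (⟨-1, 0⟩ : GaussianInt), (⟨-1, 0⟩ : GaussianInt), (⟨-1, 0⟩ : GaussianInt), (⟨1, 0⟩ : GaussianInt), (⟨1, 0⟩ : GaussianInt), (⟨1, 0⟩ : GaussianInt), (⟨1, 0⟩ : GaussianInt)],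
  ![(⟨-1, 0⟩ : GaussianInt), (⟨-1, 0⟩ : GaussianInt), (⟨-1, 0⟩ : GaussianInt), (⟨-1, 0⟩ : GaussianInt), (⟨-1, 0⟩ : GaussianInt), (⟨-1, 0⟩ : GaussianInt), (⟨-1, 0⟩ : GaussianInt), (⟨-1, 0⟩ : GaussianInt), (⟨-1, 0⟩ : GaussianInt), (⟨-1, 0⟩ : GaussianInt), (⟨-1, 0⟩ : GaussianInt), (⟨-1, 0⟩ : GaussianInt), (⟨1, 0⟩ : GaussianInt), (⟨1, 0⟩ : GaussianInt), (⟨1, 0⟩ : GaussianInt), (⟨1, 0⟩ : GaussianInt)],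
  ![(⟨1, 0⟩ : GaussianInt), (⟨1, 0⟩ : GaussianInt), (⟨1, 0⟩ : GaussianInt), (⟨1, 0⟩ : GaussianInt), (⟨-1, 0⟩ : GaussianInt), (⟨-1, 0⟩ : GaussianInt), (⟨-1, 0⟩ : GaussianInt), (⟨-1, 0⟩ : GaussianInt), (⟨-1, 0⟩ : GaussianInt), (⟨-1, 0⟩ : GaussianInt), (⟨-1, 0⟩ : GaussianInt), (⟨-1, 0⟩ : GaussianInt), (⟨-1, 0⟩ : GaussianInt), (⟨-1, 0⟩ : GaussianInt), (⟨-1, 0⟩ : GaussianInt), (⟨-1, 0⟩ : GaussianInt)],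
  ![(⟨-1, 0⟩ : GaussianInt), (⟨-1, 0⟩ : GaussianInt), (⟨-1, 0⟩ : GaussianInt), (⟨-1, 0⟩ : GaussianInt), (⟨1, 0⟩ : GaussianInt), (⟨1, 0⟩ : GaussianInt), (⟨1, 0⟩ : GaussianInt), (⟨1, 0⟩ : GaussianInt), (⟨-1, 0⟩ : GaussianInt), (⟨-1, 0⟩ : GaussianInt), (⟨-1, 0⟩ : GaussianInt), (⟨-1, 0⟩ : GaussianInt), (⟨-1, 0⟩ : GaussianInt), (⟨-1, 0⟩ : GaussianInt), (⟨-1, 0⟩ : GaussianInt), (⟨-1, 0⟩ : GaussianInt)],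
  ![(⟨0, -1⟩ : GaussianInt), (⟨0, -1⟩ : GaussianInt), (⟨0, 1⟩ : GaussianInt), (⟨0, 1⟩ : GaussianInt), (⟨0, 1⟩ : GaussianInt), (⟨0, 1⟩ : GaussianInt), (⟨0, -1⟩ : GaussianInt), (⟨0, -1⟩ : GaussianInt), (⟨1, 0⟩ : GaussianInt), (⟨1, 0⟩ : GaussianInt), (⟨-1, 0⟩ : GaussianInt), (⟨-1, 0⟩ : GaussianInt), (⟨1, 0⟩ : GaussianInt), (⟨1, 0⟩ : GaussianInt), (⟨-1, 0⟩ : GaussianInt), (⟨-1, 0⟩ : GaussianInt)],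
  ![(⟨0, 1⟩ : GaussianInt), (⟨0, 1⟩ : GaussianInt), (⟨0, -1⟩ : GaussianInt), (⟨0, -1⟩ : GaussianInt), (⟨0, -1⟩ : GaussianInt), (⟨0, -1⟩ : GaussianInt), (⟨0, 1⟩ : GaussianInt), (⟨0, 1⟩ : GaussianInt), (⟨1, 0⟩ : GaussianInt), (⟨1, 0⟩ : GaussianInt), (⟨-1, 0⟩ : GaussianInt), (⟨-1, 0⟩ : GaussianInt), (⟨1, 0⟩ : GaussianInt), (⟨1, 0⟩ : GaussianInt), (⟨-1, 0⟩ : GaussianInt), (⟨-1, 0⟩ : GaussianInt)],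
  ![(⟨0, 1⟩ : GaussianInt), (⟨0, 1⟩ : GaussianInt), (⟨0, -1⟩ : GaussianInt), (⟨0, -1⟩ : GaussianInt), (⟨0, 1⟩ : GaussianInt), (⟨0, 1⟩ : GaussianInt), (⟨0, -1⟩ : GaussianInt), (⟨0, -1⟩ : GaussianInt), (⟨-1, 0⟩ : GaussianInt), (⟨-1, 0⟩ : GaussianInt), (⟨1, 0⟩ : GaussianInt), (⟨1, 0⟩ : GaussianInt), (⟨1, 0⟩ : GaussianInt), (⟨1, 0⟩ : GaussianInt), (⟨-1, 0⟩ : GaussianInt), (⟨-1, 0⟩ : GaussianInt)],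
  ![(⟨0, -1⟩ : GaussianInt), (⟨0, -1⟩ : GaussianInt), (⟨0, 1⟩ : GaussianInt), (⟨0, 1⟩ : GaussianInt), (⟨0, -1⟩ : GaussianInt), (⟨0, -1⟩ : GaussianInt), (⟨0, 1⟩ : GaussianInt), (⟨0, 1⟩ : GaussianInt), (⟨-1, 0⟩ : GaussianInt), (⟨-1, 0⟩ : GaussianInt), (⟨1, 0⟩ : GaussianInt), (⟨1, 0⟩ : GaussianInt), (⟨1, 0⟩ : GaussianInt), (⟨1, 0⟩ : GaussianInt), (⟨-1, 0⟩ : GaussianInt), (⟨-1, 0⟩ : GaussianInt)]]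

def d1 : Fin (2 ^ 3) → Fin 2 := ![0,0,0,0,1,1,1,1]
def d2 : Fin (2 ^ 3) → Fin 4 := ![0,1,2,3,0,1,2,3]
def q1 : Fin 16 → Fin 4 := ![0,0,0,0,1,1,1,1,2,2,2,2,3,3,3,3]
def q2 : Fin 16 → Fin 4 := ![0,1,2,3,0,1,2,3,0,1,2,3,0,1,2,3]
def pe : Fin 2 → Fin 2 → Fin 4 := ![![0,1],![2,3]]

def Ug (a : Fin 16) (x : Fin 2 × Fin (2 ^ 3)) : GaussianInt :=
  epsT (q2 a) (d2 x.2) * sgT (kop (q1 a) (d2 x.2)) x.1 (d1 x.2)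

def Vg (b : Fin 16) (x : Fin 2 × Fin (2 ^ 3)) : GaussianInt :=
  thT (q1 b) (q2 b) (kop (q1 b) (d2 x.2)) * sgT (q1 b) x.1 (d1 x.2)

set_option maxRecDepth 100000 in
lemma sumU : ∀ x y : Fin 2 × Fin (2 ^ 3),
    (∑ a : Fin 16, Ug a x * star (Ug a y)) = if x = y then 8 else 0 := by decide

set_option maxRecDepth 100000 in
lemma sumV : ∀ x y : Fin 2 × Fin (2 ^ 3),
    (∑ b : Fin 16, Vg b x * star (Vg b y)) = if x = y then 8 else 0 := by decide

set_option maxRecDepth 100000 in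
lemma core : ∀ a b : Fin 16, ∀ i j : Fin 2,
    (∑ l : Fin (2 ^ 3), Ug a (i, l) * Vg b (j, l)) = zT a b * Gt (pe i j) (fT a b) := by decide

set_option maxRecDepth 100000 in
lemma zT_star : ∀ a b : Fin 16, zT a b * star (zT a b) = 1 := by decide

set_option maxRecDepth 100000 in
lemma fcount : ∀ c : Fin 4,
    (∑ a : Fin 16, ∑ b : Fin 16, if fT a b = c then (1 : ℕ) else 0) = 64 := by decide

lemma peq : ∀ p : Fin 2 × Fin 2, pe p.1 p.2 = pairEquiv p := by decide

/-- Alice's measurement vectors. -/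
def uC (a : Fin 16) (x : Fin 2 × Fin (2 ^ 3)) : ℂ := (1 + Complex.I) / 4 * (Ug a x : ℂ)

/-- Bob's measurement vectors. -/
def vC (b : Fin 16) (x : Fin 2 × Fin (2 ^ 3)) : ℂ := (1 + Complex.I) / 4 * (Vg b x : ℂ)

def Am (a : Fin 16) : Matrix (Fin 2 × Fin (2 ^ 3)) (Fin 2 × Fin (2 ^ 3)) ℂ :=
  vecMulVec (uC a) (star (uC a))

def Bm (b : Fin 16) : Matrix (Fin 2 × Fin (2 ^ 3)) (Fin 2 × Fin (2 ^ 3)) ℂ :=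
  vecMulVec (vC b) (star (vC b))

lemma psd_vecMulVec {ι : Type} [Fintype ι] (u : ι → ℂ) :
    (vecMulVec u (star u)).PosSemidef := by
  rw [posSemidef_iff_dotProduct_mulVec]
  constructor
  · ext x y
    simp only [Matrix.conjTranspose_apply, vecMulVec_apply, Pi.star_apply, Complex.star_def,
      _root_.map_mul, Complex.conj_conj]
    ring
  · intro x
    have h1 : star x ⬝ᵥ (vecMulVec u (star u)).mulVec x
        = (∑ i, (starRingEnd ℂ) (x i) * u i) * (∑ j, (starRingEnd ℂ) (u j) * x j) := by
      rw [Finset.sum_mul_sum]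
      simp only [dotProduct, Matrix.mulVec, vecMulVec_apply, Pi.star_apply, Complex.star_def,
        Finset.mul_sum]
      exact Finset.sum_congr rfl fun i _ => Finset.sum_congr rfl fun j _ => by ring
    have h2 : (∑ i, (starRingEnd ℂ) (x i) * u i)
        = (starRingEnd ℂ) (∑ j, (starRingEnd ℂ) (u j) * x j) := by
      rw [map_sum]
      exact Finset.sum_congr rfl fun j _ => by simp [mul_comm]
    rw [h1, h2, ← Complex.normSq_eq_conj_mul_self]
    exact Complex.zero_le_real.mpr (Complex.normSq_nonneg _)

lemma uC_mul_conj (a : Fin 16) (x y : Fin 2 × Fin (2 ^ 3)) :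
    uC a x * (starRingEnd ℂ) (uC a y) = (8 : ℂ)⁻¹ * ((Ug a x * star (Ug a y) : GaussianInt) : ℂ) := by
  have hc : (starRingEnd ℂ) ((1 + Complex.I) / 4) = (1 - Complex.I) / 4 := by
    simp [map_div₀, map_ofNat, sub_eq_add_neg]
  have hG : ((Ug a x * star (Ug a y) : GaussianInt) : ℂ)
      = (Ug a x : ℂ) * (starRingEnd ℂ) ((Ug a y : ℂ)) := by
    rw [GaussianInt.toComplex_mul, GaussianInt.toComplex_star]
  have hconst : (1 + Complex.I) / 4 * ((1 - Complex.I) / 4) = (8 : ℂ)⁻¹ := by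
    rw [div_mul_div_comm, show (1 + Complex.I) * (1 - Complex.I) = 2 from by
      linear_combination -Complex.I_sq]
    norm_num
  rw [uC, uC, hG, _root_.map_mul, hc]
  linear_combination ((Ug a x : ℂ) * (starRingEnd ℂ) ((Ug a y : ℂ))) * hconst

lemma vC_mul_conj (b : Fin 16) (x y : Fin 2 × Fin (2 ^ 3)) :
    vC b x * (starRingEnd ℂ) (vC b y) = (8 : ℂ)⁻¹ * ((Vg b x * star (Vg b y) : GaussianInt) : ℂ) := by
  have hc : (starRingEnd ℂ) ((1 + Complex.I) / 4) = (1 - Complex.I) / 4 := by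
    simp [map_div₀, map_ofNat, sub_eq_add_neg]
  have hG : ((Vg b x * star (Vg b y) : GaussianInt) : ℂ)
      = (Vg b x : ℂ) * (starRingEnd ℂ) ((Vg b y : ℂ)) := by
    rw [GaussianInt.toComplex_mul, GaussianInt.toComplex_star]
  have hconst : (1 + Complex.I) / 4 * ((1 - Complex.I) / 4) = (8 : ℂ)⁻¹ := by
    rw [div_mul_div_comm, show (1 + Complex.I) * (1 - Complex.I) = 2 from by
      linear_combination -Complex.I_sq]
    norm_num
  rw [vC, vC, hG, _root_.map_mul, hc]
  linear_combination ((Vg b x : ℂ) * (starRingEnd ℂ) ((Vg b y : ℂ))) * hconst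

lemma sumAm : (∑ a : Fin 16, Am a) = 1 := by
  ext x y
  rw [Matrix.sum_apply]
  have h : ∀ a : Fin 16, Am a x y = (8 : ℂ)⁻¹ * ((Ug a x * star (Ug a y) : GaussianInt) : ℂ) := by
    intro a
    rw [Am, vecMulVec_apply]
    simpa [Complex.star_def] using uC_mul_conj a x y
  rw [Finset.sum_congr rfl fun a _ => h a, ← Finset.mul_sum, ← map_sum, sumU x y]
  by_cases hxy : x = y <;> simp [hxy, Matrix.one_apply] <;> norm_num [map_ofNat]

lemma sumBm : (∑ b : Fin 16, Bm b) = 1 := by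
  ext x y
  rw [Matrix.sum_apply]
  have h : ∀ b : Fin 16, Bm b x y = (8 : ℂ)⁻¹ * ((Vg b x * star (Vg b y) : GaussianInt) : ℂ) := by
    intro b
    rw [Bm, vecMulVec_apply]
    simpa [Complex.star_def] using vC_mul_conj b x y
  rw [Finset.sum_congr rfl fun b _ => h b, ← Finset.mul_sum, ← map_sum, sumV x y]
  by_cases hxy : x = y <;> simp [hxy, Matrix.one_apply] <;> norm_num [map_ofNat]

lemma ME (x : Fin 4) (c : Fin 4) :
    M_EJM x c = ((Real.sqrt 8 : ℂ))⁻¹ * (Gt x c : ℂ) := by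
  fin_cases x <;> fin_cases c <;>
    simp [M_EJM, Gt, GaussianInt.toComplex_def', Matrix.smul_apply, smul_eq_mul] <;> ring

lemma sqrt8_inv_sq : ((Real.sqrt 8 : ℂ))⁻¹ * (starRingEnd ℂ) ((Real.sqrt 8 : ℂ))⁻¹ = (8 : ℂ)⁻¹ := by
  have h8 : (Real.sqrt 8 : ℝ) * Real.sqrt 8 = 8 := Real.mul_self_sqrt (by norm_num)
  rw [map_inv₀, Complex.conj_ofReal, ← mul_inv]
  rw [show ((Real.sqrt 8 : ℂ)) * (Real.sqrt 8 : ℂ) = ((Real.sqrt 8 * Real.sqrt 8 : ℝ) : ℂ) from by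
    push_cast; ring]
  rw [h8]
  norm_num

lemma proj_entry (c : Fin 4) (p q : Fin 2 × Fin 2) :
    projPOVM M_EJM c p q
      = (8 : ℂ)⁻¹ * ((Gt (pe p.1 p.2) c : ℂ) * (starRingEnd ℂ) ((Gt (pe q.1 q.2) c : ℂ))) := by
  rw [projPOVM, Matrix.of_apply, ← peq p, ← peq q, ME, ME]
  simp only [Complex.star_def, _root_.map_mul]
  have h := sqrt8_inv_sq
  linear_combination ((Gt (pe p.1 p.2) c : ℂ) * (starRingEnd ℂ) ((Gt (pe q.1 q.2) c : ℂ))) * h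

lemma scoreC (a b : Fin 16) (i j : Fin 2) :
    (∑ l : Fin (2 ^ 3), uC a (i, l) * vC b (j, l))
      = Complex.I / 8 * ((zT a b * Gt (pe i j) (fT a b) : GaussianInt) : ℂ) := by
  have h1 : ∀ l : Fin (2 ^ 3), uC a (i, l) * vC b (j, l)
      = Complex.I / 8 * ((Ug a (i, l) * Vg b (j, l) : GaussianInt) : ℂ) := by
    intro l
    rw [uC, vC, GaussianInt.toComplex_mul]
    have hconst : (1 + Complex.I) / 4 * ((1 + Complex.I) / 4) = Complex.I / 8 := by
      rw [div_mul_div_comm, show (1 + Complex.I) * (1 + Complex.I) = 2 * Complex.I from by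
        linear_combination Complex.I_sq]
      ring
    linear_combination ((Ug a (i, l) : ℂ) * (Vg b (j, l) : ℂ)) * hconst
  rw [Finset.sum_congr rfl fun l _ => h1 l, ← Finset.mul_sum, ← map_sum, core a b i j]

lemma Tmap_pair (a b : Fin 16) :
    Tmap 3 (Am a) (Bm b) = (64 : ℂ)⁻¹ • projPOVM M_EJM (fT a b) := by
  ext p q
  have expand : Tmap 3 (Am a) (Bm b) p q
      = ((2 : ℂ) ^ 3)⁻¹ * ((∑ l : Fin (2 ^ 3), uC a (p.1, l) * vC b (p.2, l)) *
          (starRingEnd ℂ) (∑ k : Fin (2 ^ 3), uC a (q.1, k) * vC b (q.2, k))) := by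
    rw [Tmap, Matrix.of_apply]
    congr 1
    rw [map_sum, Finset.sum_mul_sum]
    refine Finset.sum_congr rfl fun l _ => Finset.sum_congr rfl fun k _ => ?_
    simp only [Am, Bm, vecMulVec_apply, Pi.star_apply, Complex.star_def, _root_.map_mul]
    ring
  rw [expand, scoreC a b p.1 p.2, scoreC a b q.1 q.2]
  rw [Matrix.smul_apply, proj_entry, smul_eq_mul]
  simp only [_root_.map_mul, GaussianInt.toComplex_mul]
  have hz : ((zT a b : GaussianInt) : ℂ) * (starRingEnd ℂ) ((zT a b : GaussianInt) : ℂ) = 1 := by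
    rw [← GaussianInt.toComplex_star, ← GaussianInt.toComplex_mul, zT_star a b]
    exact GaussianInt.toComplex_one
  have hI : (starRingEnd ℂ) (Complex.I / 8) = -(Complex.I / 8) := by
    simp [map_div₀, map_ofNat, neg_div]
  rw [hI]
  have hIsq := Complex.I_sq
  set Zp := ((Gt (pe p.1 p.2) (fT a b) : GaussianInt) : ℂ)
  set Zq := ((Gt (pe q.1 q.2) (fT a b) : GaussianInt) : ℂ)
  set z := ((zT a b : GaussianInt) : ℂ)
  have : ((2 : ℂ) ^ 3)⁻¹ = (8 : ℂ)⁻¹ := by norm_num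
  rw [this]
  linear_combination (-(Zp * (starRingEnd ℂ) Zq * (z * (starRingEnd ℂ) z)) / 512) * hIsq
    + ((Zp * (starRingEnd ℂ) Zq) / 512) * hz

end EJM3

/-- The elegant joint measurement is 3-ebit localizable. -/
theorem ejm_three_ebit_localizable : NEbitLocalizable 3 (projPOVM M_EJM) := by
  refine ⟨16, 16, EJM3.Am, EJM3.Bm, fun c a b => if EJM3.fT a b = c then (1 : ℝ) else 0,
    fun a => EJM3.psd_vecMulVec _, EJM3.sumAm, fun b => EJM3.psd_vecMulVec _, EJM3.sumBm,
    ?_, ?_, ?_⟩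
  · intro c a b
    dsimp only
    constructor <;> split <;> norm_num
  · intro a b
    dsimp only
    simp [Finset.sum_ite_eq]
  · intro c
    have hterm : ∀ a b : Fin 16,
        (((if EJM3.fT a b = c then (1 : ℝ) else 0 : ℝ)) : ℂ) • Tmap 3 (EJM3.Am a) (EJM3.Bm b)
          = (if EJM3.fT a b = c then (1 : ℂ) else 0) • ((64 : ℂ)⁻¹ • projPOVM M_EJM c) := by
      intro a b
      by_cases h : EJM3.fT a b = c
      · rw [EJM3.Tmap_pair a b, h]; simp
      · simp [h]
    rw [Finset.sum_congr rfl fun a _ => Finset.sum_congr rfl fun b _ => hterm a b]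
    have hcast : (∑ a : Fin 16, ∑ b : Fin 16, (if EJM3.fT a b = c then (1 : ℂ) else 0)) = 64 := by
      have hn := EJM3.fcount c
      have : (∑ a : Fin 16, ∑ b : Fin 16, (if EJM3.fT a b = c then (1 : ℂ) else 0))
          = ((∑ a : Fin 16, ∑ b : Fin 16, (if EJM3.fT a b = c then (1 : ℕ) else 0) : ℕ) : ℂ) := by
        rw [Nat.cast_sum]
        refine Finset.sum_congr rfl fun a _ => ?_
        rw [Nat.cast_sum]
        refine Finset.sum_congr rfl fun b _ => ?_
        split <;> simp
      rw [this, hn]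
      norm_num
    rw [show (∑ a : Fin 16, ∑ b : Fin 16,
          (if EJM3.fT a b = c then (1 : ℂ) else 0) • ((64 : ℂ)⁻¹ • projPOVM M_EJM c))
        = (∑ a : Fin 16, ∑ b : Fin 16, (if EJM3.fT a b = c then (1 : ℂ) else 0)) •
            ((64 : ℂ)⁻¹ • projPOVM M_EJM c) from by
      rw [Finset.sum_smul]
      exact Finset.sum_congr rfl fun a _ => by rw [Finset.sum_smul]]
    rw [hcast, smul_smul]
    norm_num
end
end

section
/- The Bell state measurement can be localized with a single shared EPR pair: the rank-one projective POVM {|ψ_c⟩⟨ψ_c|}_{c=1,…,4}, where ψ_1,…,ψ_4 are the columns of the unitary M_BSM (the four Bell states), is 1-ebit localizable. -/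
open Matrix Complex Kronecker
open scoped ComplexOrder

noncomputable section

/-- The Bell state measurement. -/
def M_BSM : Matrix (Fin 4) (Fin 4) ℂ :=
  ((Real.sqrt 2 : ℂ))⁻¹ • !![1,1,0,0; 0,0,1,1; 0,0,1,-1; 1,-1,0,0]

def vZ (a : Fin 4) (x : Fin 2 × Fin 2) : ℤ :=
  !![1,1,0,0; 0,0,1,1; 0,0,1,-1; 1,-1,0,0] (⟨2 * x.1.val + x.2.val, by omega⟩ : Fin 4) a

def fxor (a b : Fin 4) : Fin 4 :=
  ⟨a.val ^^^ b.val, by have := Nat.xor_lt_two_pow (n := 2) a.isLt b.isLt; omega⟩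

theorem keySumZ : ∀ x y : Fin 2 × Fin 2,
    ∑ a : Fin 4, vZ a x * vZ a y = if x = y then 2 else 0 := by decide

theorem keyMainZ : ∀ (c : Fin 4) (x y : Fin 2 × Fin 2),
    4 * vZ c x * vZ c y =
    ∑ a : Fin 4, ∑ b : Fin 4, (if c = fxor a b then 1 else 0) *
      ∑ l : Fin 2, ∑ k : Fin 2,
        vZ a (x.1, l) * vZ a (y.1, k) * (vZ b (x.2, l) * vZ b (y.2, k)) := by decide

def Bell (a : Fin 4) : Matrix (Fin 2 × Fin 2) (Fin 2 × Fin 2) ℂ :=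
  Matrix.of fun x y => (1/2 : ℂ) * ((vZ a x : ℂ) * (vZ a y : ℂ))

lemma hhalf : ((Real.sqrt 2 : ℂ))⁻¹ * ((Real.sqrt 2 : ℂ))⁻¹ = 1/2 := by
  rw [← mul_inv, ← Complex.ofReal_mul, Real.mul_self_sqrt (by norm_num)]
  norm_num

lemma bell_psd (a : Fin 4) : (Bell a).PosSemidef := by
  have h := Matrix.posSemidef_conjTranspose_mul_self
    (A := (Matrix.of fun (_ : Fin 1) (x : Fin 2 × Fin 2) =>
      ((Real.sqrt 2 : ℂ))⁻¹ * (vZ a x : ℂ)))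
  convert h using 1
  ext x y
  simp only [Bell, Matrix.of_apply, Matrix.mul_apply, Matrix.conjTranspose_apply,
    Fin.sum_univ_one, Matrix.of_apply, star_mul', star_inv₀,
    Complex.star_def, Complex.conj_ofReal, map_intCast]
  rw [show ((Real.sqrt 2 : ℂ))⁻¹ * (vZ a x : ℂ) * (((Real.sqrt 2 : ℂ))⁻¹ * (vZ a y : ℂ))
      = (((Real.sqrt 2 : ℂ))⁻¹ * ((Real.sqrt 2 : ℂ))⁻¹) * ((vZ a x : ℂ) * (vZ a y : ℂ)) by ring,
    hhalf]

lemma bell_sum : ∑ a : Fin 4, Bell a = 1 := by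
  ext x y
  rw [Matrix.sum_apply]
  have h : (∑ a : Fin 4, Bell a x y)
      = (1/2 : ℂ) * ((∑ a : Fin 4, vZ a x * vZ a y : ℤ) : ℂ) := by
    push_cast
    rw [Finset.mul_sum]
    exact Finset.sum_congr rfl fun a _ => by simp [Bell]
  rw [h, keySumZ x y, Matrix.one_apply]
  split <;> norm_num

lemma entry (c : Fin 4) (x y : Fin 2 × Fin 2) :
    (1/2 : ℂ) * ((vZ c x : ℂ) * (vZ c y : ℂ)) =
    ∑ a : Fin 4, ∑ b : Fin 4, (if c = fxor a b then (1:ℂ) else 0) *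
      ((2 : ℂ)⁻¹ * ∑ l : Fin 2, ∑ k : Fin 2,
        ((1/2 : ℂ) * ((vZ a (x.1, l) : ℂ) * (vZ a (y.1, k) : ℂ))) *
        ((1/2 : ℂ) * ((vZ b (x.2, l) : ℂ) * (vZ b (y.2, k) : ℂ)))) := by
  have hk := congrArg (fun z : ℤ => (z : ℂ)) (keyMainZ c x y)
  push_cast [apply_ite (fun z : ℤ => (z : ℂ))] at hk
  symm
  calc
    ∑ a : Fin 4, ∑ b : Fin 4, (if c = fxor a b then (1:ℂ) else 0) *
        ((2 : ℂ)⁻¹ * ∑ l : Fin 2, ∑ k : Fin 2,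
          ((1/2 : ℂ) * ((vZ a (x.1, l) : ℂ) * (vZ a (y.1, k) : ℂ))) *
          ((1/2 : ℂ) * ((vZ b (x.2, l) : ℂ) * (vZ b (y.2, k) : ℂ))))
      = ∑ a : Fin 4, ∑ b : Fin 4, (if c = fxor a b then (1:ℂ) else 0) *
          ((1/8 : ℂ) * ∑ l : Fin 2, ∑ k : Fin 2,
            (vZ a (x.1, l) : ℂ) * (vZ a (y.1, k) : ℂ) *
            ((vZ b (x.2, l) : ℂ) * (vZ b (y.2, k) : ℂ))) := by
        refine Finset.sum_congr rfl fun a _ => Finset.sum_congr rfl fun b _ => ?_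
        congr 1
        simp only [Finset.mul_sum]
        exact Finset.sum_congr rfl fun l _ => Finset.sum_congr rfl fun k _ => by ring
    _ = (1/8 : ℂ) * ∑ a : Fin 4, ∑ b : Fin 4, (if c = fxor a b then (1:ℂ) else 0) *
          ∑ l : Fin 2, ∑ k : Fin 2,
            (vZ a (x.1, l) : ℂ) * (vZ a (y.1, k) : ℂ) *
            ((vZ b (x.2, l) : ℂ) * (vZ b (y.2, k) : ℂ)) := by
        simp only [Finset.mul_sum]
        refine Finset.sum_congr rfl fun a _ => Finset.sum_congr rfl fun b _ =>
          Finset.sum_congr rfl fun l _ => Finset.sum_congr rfl fun k _ => by ring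
    _ = (1/8 : ℂ) * ((4 : ℂ) * (vZ c x : ℂ) * (vZ c y : ℂ)) := by rw [← hk]
    _ = (1/2 : ℂ) * ((vZ c x : ℂ) * (vZ c y : ℂ)) := by ring

lemma hM (x : Fin 2 × Fin 2) (c : Fin 4) :
    M_BSM (pairEquiv x) c = ((Real.sqrt 2 : ℂ))⁻¹ * (vZ c x : ℂ) := by
  obtain ⟨i, j⟩ := x
  fin_cases i <;> fin_cases j <;> fin_cases c <;>
    simp [M_BSM, vZ, pairEquiv]

/-- The Bell state measurement is 1-ebit localizable. -/
theorem bsm_one_ebit_localizable : NEbitLocalizable 1 (projPOVM M_BSM) := by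
  refine ⟨4, 4, fun a => Bell a, fun b => Bell b,
    fun c a b => if c = fxor a b then 1 else 0,
    fun a => bell_psd a, bell_sum, fun b => bell_psd b, bell_sum,
    ?_, ?_, ?_⟩
  · intro c a b
    refine ⟨?_, ?_⟩ <;> dsimp only <;> split_ifs <;> norm_num
  · intro a b
    simp
  · intro c
    ext x y
    have hL : projPOVM M_BSM c x y = (1/2 : ℂ) * ((vZ c x : ℂ) * (vZ c y : ℂ)) := by
      simp only [projPOVM, Matrix.of_apply, hM, star_mul', star_inv₀,
        Complex.star_def, Complex.conj_ofReal, map_intCast]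
      rw [show ((Real.sqrt 2 : ℂ))⁻¹ * (vZ c x : ℂ) * (((Real.sqrt 2 : ℂ))⁻¹ * (vZ c y : ℂ))
          = (((Real.sqrt 2 : ℂ))⁻¹ * ((Real.sqrt 2 : ℂ))⁻¹) * ((vZ c x : ℂ) * (vZ c y : ℂ)) by ring,
        hhalf]
    rw [hL]
    have hR : (∑ a : Fin 4, ∑ b : Fin 4,
          (((if c = fxor a b then (1:ℝ) else 0) : ℝ) : ℂ) • Tmap 1 (Bell a) (Bell b)) x y
        = ∑ a : Fin 4, ∑ b : Fin 4, (if c = fxor a b then (1:ℂ) else 0) *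
            ((2 : ℂ)⁻¹ * ∑ l : Fin 2, ∑ k : Fin 2,
              ((1/2 : ℂ) * ((vZ a (x.1, l) : ℂ) * (vZ a (y.1, k) : ℂ))) *
              ((1/2 : ℂ) * ((vZ b (x.2, l) : ℂ) * (vZ b (y.2, k) : ℂ)))) := by
      have hT : ∀ a b : Fin 4, Tmap 1 (Bell a) (Bell b) x y
          = ((2 : ℂ) ^ 1)⁻¹ * ∑ l : Fin 2, ∑ k : Fin 2,
              ((1/2 : ℂ) * ((vZ a (x.1, l) : ℂ) * (vZ a (y.1, k) : ℂ))) *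
              ((1/2 : ℂ) * ((vZ b (x.2, l) : ℂ) * (vZ b (y.2, k) : ℂ))) := fun a b => rfl
      rw [Matrix.sum_apply]
      refine Finset.sum_congr rfl fun a _ => ?_
      rw [Matrix.sum_apply]
      refine Finset.sum_congr rfl fun b _ => ?_
      rw [Matrix.smul_apply, smul_eq_mul, hT, pow_one]
      congr 1
      simp only [apply_ite (fun r : ℝ => (r : ℂ)), Complex.ofReal_one, Complex.ofReal_zero]
    rw [hR]
    exact entry c x y
end
end

section
/- Lemma 2 (uniqueness of the intertwiner up to a local unitary): Let M and N be 4×4 complex unitary matrices such that M†·(I₂⊗σ_b)·M = N†·(I₂⊗σ_b)·N for every b ∈ {X,Y,Z}. Then there exists a 2×2 unitary matrix U such that N = (U⊗I₂)·M. -/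
open Matrix Complex Kronecker

noncomputable section

lemma kron_one_σX : kron 1 σX = !![0,1,0,0;1,0,0,0;0,0,0,1;0,0,1,0] := by
  ext i j
  fin_cases i <;> fin_cases j <;>
    simp [kron, pairEquiv, σX, Matrix.kroneckerMap_apply, Matrix.one_apply, Fin.ext_iff,
      Matrix.vecHead, Matrix.vecTail, show ((3:Fin 4):ℕ) = 3 from rfl]

lemma kron_one_σZ : kron 1 σZ = !![1,0,0,0;0,-1,0,0;0,0,1,0;0,0,0,-1] := by
  ext i j
  fin_cases i <;> fin_cases j <;>
    simp [kron, pairEquiv, σZ, Matrix.kroneckerMap_apply, Matrix.one_apply, Fin.ext_iff,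
      Matrix.vecHead, Matrix.vecTail, show ((3:Fin 4):ℕ) = 3 from rfl]

lemma kron_one_right (U : Matrix (Fin 2) (Fin 2) ℂ) :
    kron U 1 = !![U 0 0, 0, U 0 1, 0; 0, U 0 0, 0, U 0 1;
                  U 1 0, 0, U 1 1, 0; 0, U 1 0, 0, U 1 1] := by
  ext i j
  fin_cases i <;> fin_cases j <;>
    simp [kron, pairEquiv, Matrix.kroneckerMap_apply, Matrix.one_apply, Fin.ext_iff,
      Matrix.vecHead, Matrix.vecTail, show ((3:Fin 4):ℕ) = 3 from rfl]

lemma comm_of_conj {A B X : Matrix (Fin 4) (Fin 4) ℂ}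
    (hA2 : A * Aᴴ = 1) (hB2 : B * Bᴴ = 1) (e : Aᴴ * X * A = Bᴴ * X * B) :
    (B * Aᴴ) * X = X * (B * Aᴴ) := by
  have e2 : B * (Aᴴ * X * A) * Aᴴ = B * (Bᴴ * X * B) * Aᴴ := by rw [e]
  calc (B * Aᴴ) * X = (B * Aᴴ) * X * (A * Aᴴ) := by rw [hA2, mul_one]
    _ = B * (Aᴴ * X * A) * Aᴴ := by noncomm_ring
    _ = B * (Bᴴ * X * B) * Aᴴ := e2
    _ = (B * Bᴴ) * (X * (B * Aᴴ)) := by noncomm_ring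
    _ = X * (B * Aᴴ) := by rw [hB2, one_mul]

lemma exists_kron_of_comm (V : Matrix (Fin 4) (Fin 4) ℂ) (hVu : Vᴴ * V = 1)
    (hVX : V * !![0,1,0,0;1,0,0,0;0,0,0,1;0,0,1,0] = !![0,1,0,0;1,0,0,0;0,0,0,1;0,0,1,0] * V)
    (hVZ : V * !![1,0,0,0;0,-1,0,0;0,0,1,0;0,0,0,-1] = !![1,0,0,0;0,-1,0,0;0,0,1,0;0,0,0,-1] * V) :
    ∃ U : Matrix (Fin 2) (Fin 2) ℂ, U ∈ Matrix.unitaryGroup (Fin 2) ℂ ∧ kron U 1 = V := by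
  have hz := fun i j => congrFun (congrFun hVZ i) j
  have z01 : V 0 1 = 0 := by
    have := hz 0 1; simp [Matrix.mul_apply, Fin.sum_univ_four, Matrix.vecHead, Matrix.vecTail] at this
    linear_combination (-1/2 : ℂ) * this
  have z03 : V 0 3 = 0 := by
    have := hz 0 3; simp [Matrix.mul_apply, Fin.sum_univ_four, Matrix.vecHead, Matrix.vecTail] at this
    linear_combination (-1/2 : ℂ) * this
  have z10 : V 1 0 = 0 := by
    have := hz 1 0; simp [Matrix.mul_apply, Fin.sum_univ_four, Matrix.vecHead, Matrix.vecTail] at this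
    linear_combination (1/2 : ℂ) * this
  have z12 : V 1 2 = 0 := by
    have := hz 1 2; simp [Matrix.mul_apply, Fin.sum_univ_four, Matrix.vecHead, Matrix.vecTail] at this
    linear_combination (1/2 : ℂ) * this
  have z21 : V 2 1 = 0 := by
    have := hz 2 1; simp [Matrix.mul_apply, Fin.sum_univ_four, Matrix.vecHead, Matrix.vecTail] at this
    linear_combination (-1/2 : ℂ) * this
  have z23 : V 2 3 = 0 := by
    have := hz 2 3; simp [Matrix.mul_apply, Fin.sum_univ_four, Matrix.vecHead, Matrix.vecTail] at this
    linear_combination (-1/2 : ℂ) * this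
  have z30 : V 3 0 = 0 := by
    have := hz 3 0; simp [Matrix.mul_apply, Fin.sum_univ_four, Matrix.vecHead, Matrix.vecTail] at this
    linear_combination (1/2 : ℂ) * this
  have z32 : V 3 2 = 0 := by
    have := hz 3 2; simp [Matrix.mul_apply, Fin.sum_univ_four, Matrix.vecHead, Matrix.vecTail] at this
    linear_combination (1/2 : ℂ) * this
  have hx := fun i j => congrFun (congrFun hVX i) j
  have e11 : V 1 1 = V 0 0 := by
    have := hx 0 1; simp [Matrix.mul_apply, Fin.sum_univ_four, Matrix.vecHead, Matrix.vecTail] at this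
    linear_combination -this
  have e13 : V 1 3 = V 0 2 := by
    have := hx 0 3; simp [Matrix.mul_apply, Fin.sum_univ_four, Matrix.vecHead, Matrix.vecTail] at this
    linear_combination -this
  have e31 : V 3 1 = V 2 0 := by
    have := hx 2 1; simp [Matrix.mul_apply, Fin.sum_univ_four, Matrix.vecHead, Matrix.vecTail] at this
    linear_combination -this
  have e33 : V 3 3 = V 2 2 := by
    have := hx 2 3; simp [Matrix.mul_apply, Fin.sum_univ_four, Matrix.vecHead, Matrix.vecTail] at this
    linear_combination -this
  refine ⟨!![V 0 0, V 0 2; V 2 0, V 2 2], ?_, ?_⟩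
  · rw [Matrix.mem_unitaryGroup_iff', Matrix.star_eq_conjTranspose]
    have hu := fun i j => congrFun (congrFun hVu i) j
    have u00 := hu 0 0
    have u02 := hu 0 2
    have u20 := hu 2 0
    have u22 := hu 2 2
    simp [Matrix.mul_apply, Fin.sum_univ_four, Matrix.conjTranspose_apply, Matrix.one_apply,
      z10, z30, z12, z32] at u00 u02 u20 u22
    ext i j
    fin_cases i <;> fin_cases j <;>
      simp [Matrix.mul_apply, Fin.sum_univ_two, Matrix.conjTranspose_apply, Matrix.one_apply]
    · linear_combination u00
    · linear_combination u02
    · linear_combination u20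
    · linear_combination u22
  · rw [kron_one_right]
    ext i j
    fin_cases i <;> fin_cases j <;>
      simp [z01, z03, z10, z12, z21, z23, z30, z32, e11, e13, e31, e33]

/-- Lemma 2: uniqueness of the intertwiner up to a local unitary on the first factor. -/
theorem intertwiner_unique (M N : Matrix (Fin 4) (Fin 4) ℂ)
    (hM : M ∈ Matrix.unitaryGroup (Fin 4) ℂ) (hN : N ∈ Matrix.unitaryGroup (Fin 4) ℂ)
    (h : ∀ b ∈ ({σX, σY, σZ} : Set (Matrix (Fin 2) (Fin 2) ℂ)),
      Mᴴ * kron 1 b * M = Nᴴ * kron 1 b * N) :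
    ∃ U : Matrix (Fin 2) (Fin 2) ℂ, U ∈ Matrix.unitaryGroup (Fin 2) ℂ ∧
      N = kron U 1 * M := by
  have hM1 : Mᴴ * M = 1 := by
    have := hM.1; rwa [Matrix.star_eq_conjTranspose] at this
  have hM2 : M * Mᴴ = 1 := by
    have := hM.2; rwa [Matrix.star_eq_conjTranspose] at this
  have hN1 : Nᴴ * N = 1 := by
    have := hN.1; rwa [Matrix.star_eq_conjTranspose] at this
  have hN2 : N * Nᴴ = 1 := by
    have := hN.2; rwa [Matrix.star_eq_conjTranspose] at this
  have hmemX : σX ∈ ({σX, σY, σZ} : Set (Matrix (Fin 2) (Fin 2) ℂ)) := by left; rfl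
  have hmemZ : σZ ∈ ({σX, σY, σZ} : Set (Matrix (Fin 2) (Fin 2) ℂ)) := by right; right; rfl
  have hVX := comm_of_conj hM2 hN2 (h σX hmemX)
  have hVZ := comm_of_conj hM2 hN2 (h σZ hmemZ)
  rw [kron_one_σX] at hVX
  rw [kron_one_σZ] at hVZ
  have hVu : (N * Mᴴ)ᴴ * (N * Mᴴ) = 1 := by
    rw [Matrix.conjTranspose_mul, Matrix.conjTranspose_conjTranspose]
    calc M * Nᴴ * (N * Mᴴ) = M * (Nᴴ * N) * Mᴴ := by noncomm_ring
      _ = 1 := by rw [hN1, mul_one, hM2]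
  obtain ⟨U, hUmem, hUeq⟩ := exists_kron_of_comm (N * Mᴴ) hVu hVX hVZ
  exact ⟨U, hUmem, by rw [hUeq, mul_assoc, hM1, mul_one]⟩
end
end

section
/- The Clifford hierarchy is contained in the finite-consumption Vaidman hierarchy: for every k ≥ 0, C_k ⊆ V̄_k, and for every k ≥ 1, C_k ⊆ V_k. -/
open Matrix Complex Kronecker

noncomputable section

/-- The two-qubit Pauli group: matrices `c·(σ_a ⊗ σ_b)` with `c ∈ {1, i, -1, -i}`. -/
def PauliGroup : Set (Matrix (Fin 4) (Fin 4) ℂ) :=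
  {Q | ∃ (a b : Fin 4) (c : ℂ),
    (c = 1 ∨ c = Complex.I ∨ c = -1 ∨ c = -Complex.I) ∧
    Q = c • kron (pauli a) (pauli b)}

/-- The Clifford hierarchy: `C 0` is the Pauli group and `C (k+1)` consists of the
unitaries mapping the Pauli group into `C k` under conjugation. -/
def Cliff : ℕ → Set (Matrix (Fin 4) (Fin 4) ℂ)
  | 0 => PauliGroup
  | k + 1 => {U | U ∈ Matrix.unitaryGroup (Fin 4) ℂ ∧
      ∀ Q ∈ PauliGroup, Uᴴ * Q * U ∈ Cliff k}

/-- The auxiliary Vaidman hierarchy `V̄`. -/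
def Vbar : ℕ → Set (Matrix (Fin 4) (Fin 4) ℂ)
  | 0 => {P | PermPhase P}
  | k + 1 => {M | M ∈ Matrix.unitaryGroup (Fin 4) ℂ ∧
      ∀ Q ∈ PauliGroup, Mᴴ * Q * M ∈ Vbar k}

/-- The Vaidman hierarchy `V` (defined for levels `k ≥ 1`). -/
def Vaid : ℕ → Set (Matrix (Fin 4) (Fin 4) ℂ)
  | 0 => {P | PermPhase P}
  | k + 1 => {M | M ∈ Matrix.unitaryGroup (Fin 4) ℂ ∧
      ∀ b : Fin 4, Mᴴ * kron 1 (pauli b) * M ∈ Vbar k}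

/-- 2×2 analogue of `PermPhase`. -/
def PermPhase2 (A : Matrix (Fin 2) (Fin 2) ℂ) : Prop :=
  ∃ (π : Equiv.Perm (Fin 2)) (φ : Fin 2 → ℂ),
    (∀ j, ‖φ j‖ = 1) ∧ ∀ i j, A i j = if i = π j then φ j else 0

lemma pauli_permPhase2 (a : Fin 4) : PermPhase2 (pauli a) := by
  fin_cases a
  · exact ⟨Equiv.refl _, fun _ => 1, fun _ => by simp,
      fun i j => by simp [pauli, Matrix.one_apply]; congr⟩
  · refine ⟨Equiv.swap 0 1, fun _ => 1, fun _ => by simp, fun i j => ?_⟩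
    fin_cases i <;> fin_cases j <;> simp [pauli, σX, Equiv.swap_apply_def]
  · refine ⟨Equiv.swap 0 1, ![Complex.I, -Complex.I],
      fun j => by fin_cases j <;> simp, fun i j => ?_⟩
    fin_cases i <;> fin_cases j <;> simp [pauli, σY, Equiv.swap_apply_def]
  · refine ⟨Equiv.refl _, ![1, -1], fun j => by fin_cases j <;> simp, fun i j => ?_⟩
    fin_cases i <;> fin_cases j <;> simp [pauli, σZ]

lemma kron_apply' (A B : Matrix (Fin 2) (Fin 2) ℂ) (i j : Fin 4) :
    kron A B i j = A (pairEquiv.symm i).1 (pairEquiv.symm j).1 *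
      B (pairEquiv.symm i).2 (pairEquiv.symm j).2 := by
  simp [kron, Matrix.kroneckerMap_apply]

lemma permPhase_smul_kron {A B : Matrix (Fin 2) (Fin 2) ℂ} {c : ℂ}
    (hc : ‖c‖ = 1) (hA : PermPhase2 A) (hB : PermPhase2 B) :
    PermPhase (c • kron A B) := by
  obtain ⟨π₁, φ₁, hφ₁, h₁⟩ := hA
  obtain ⟨π₂, φ₂, hφ₂, h₂⟩ := hB
  refine ⟨pairEquiv.symm.trans ((Equiv.prodCongr π₁ π₂).trans pairEquiv),
    fun k => c * (φ₁ (pairEquiv.symm k).1 * φ₂ (pairEquiv.symm k).2), ?_, ?_⟩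
  · intro j; simp [_root_.map_mul, hc, hφ₁, hφ₂]
  · intro i j
    rw [Matrix.smul_apply, kron_apply', h₁, h₂]
    have hiff : (i = (pairEquiv.symm.trans ((Equiv.prodCongr π₁ π₂).trans pairEquiv)) j)
        ↔ ((pairEquiv.symm i).1 = π₁ (pairEquiv.symm j).1 ∧
           (pairEquiv.symm i).2 = π₂ (pairEquiv.symm j).2) := by
      rw [Equiv.trans_apply, Equiv.trans_apply, ← Equiv.symm_apply_eq, Prod.ext_iff]
      rfl
    simp only [hiff, smul_eq_mul]
    by_cases h1 : (pairEquiv.symm i).1 = π₁ (pairEquiv.symm j).1 <;>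
      by_cases h2 : (pairEquiv.symm i).2 = π₂ (pairEquiv.symm j).2 <;>
      simp [h1, h2] <;> ring

lemma pauliGroup_permPhase {Q : Matrix (Fin 4) (Fin 4) ℂ} (hQ : Q ∈ PauliGroup) :
    PermPhase Q := by
  obtain ⟨a, b, c, hc, rfl⟩ := hQ
  have habs : ‖c‖ = 1 := by rcases hc with h | h | h | h <;> simp [h]
  exact permPhase_smul_kron habs (pauli_permPhase2 a) (pauli_permPhase2 b)

lemma kron_one_pauli_mem (b : Fin 4) : kron 1 (pauli b) ∈ PauliGroup := by
  refine ⟨0, b, 1, Or.inl rfl, ?_⟩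
  have : pauli 0 = 1 := by simp [pauli]
  rw [this, one_smul]

/-- The Clifford hierarchy is contained in the finite-consumption Vaidman hierarchy. -/
theorem clifford_subset_vaidman :
    (∀ k : ℕ, Cliff k ⊆ Vbar k) ∧ (∀ k : ℕ, 1 ≤ k → Cliff k ⊆ Vaid k) := by
  have hbar : ∀ k : ℕ, Cliff k ⊆ Vbar k := by
    intro k
    induction k with
    | zero => intro Q hQ; exact pauliGroup_permPhase hQ
    | succ k ih =>
      intro U hU
      exact ⟨hU.1, fun Q hQ => ih (hU.2 Q hQ)⟩
  refine ⟨hbar, ?_⟩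
  intro k hk U hU
  obtain ⟨m, rfl⟩ : ∃ m, k = m + 1 := ⟨k - 1, by omega⟩
  exact ⟨hU.1, fun b => hbar m (hU.2 _ (kron_one_pauli_mem b))⟩
end
end

section
/- Deterministic termination for binary-angle Pauli rotations in the Clark et al. scheme: Let P be an n×n complex matrix with P² = I_n, let D be a nonnegative integer, let m be an integer, and set θ = (2m−1)·π/2^D. Then exp(−i·(2^{D+1}−1)·θ·P) = exp(i·θ·P); that is, after D+1 consecutive sign errors the accumulated rotation by angle −∑_{n=0}^{D} 2^n·θ equals the intended rotation by θ, so the localization of a Pauli rotation with binary angle θ is guaranteed to succeed after at most D+1 ping-pong teleportation steps. -/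
open Matrix Complex

noncomputable section

open scoped Nat

lemma exp_smul_involutive {n : ℕ} (P : Matrix (Fin n) (Fin n) ℂ)
    (hP : P * P = 1) (z : ℂ) :
    NormedSpace.exp (z • P) =
      Complex.cosh z • (1 : Matrix (Fin n) (Fin n) ℂ) + Complex.sinh z • P := by
  have hP2 : P ^ 2 = 1 := by rw [sq, hP]
  rw [NormedSpace.exp_eq_tsum ℂ]
  refine HasSum.tsum_eq ?_
  have heven : ∀ k : ℕ, ((2 * k)! : ℂ)⁻¹ • (z • P) ^ (2 * k) =
      (z ^ (2 * k) / (2 * k)!) • (1 : Matrix (Fin n) (Fin n) ℂ) := by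
    intro k
    have : P ^ (2 * k) = 1 := by rw [pow_mul, hP2, one_pow]
    rw [smul_pow, this, smul_smul, div_eq_inv_mul]
  have hodd : ∀ k : ℕ, ((2 * k + 1)! : ℂ)⁻¹ • (z • P) ^ (2 * k + 1) =
      (z ^ (2 * k + 1) / (2 * k + 1)!) • P := by
    intro k
    have : P ^ (2 * k + 1) = P := by rw [pow_succ, pow_mul, hP2, one_pow, one_mul]
    rw [smul_pow, this, smul_smul, div_eq_inv_mul]
  refine HasSum.even_add_odd ?_ ?_
  · simpa only [heven] using (Complex.hasSum_cosh z).smul_const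
      (1 : Matrix (Fin n) (Fin n) ℂ)
  · simpa only [hodd] using (Complex.hasSum_sinh z).smul_const P

/-- Deterministic termination for binary-angle Pauli rotations in the Clark et al.
scheme: if `P² = 1` and `θ = (2m−1)π/2^D`, then
`exp(−i(2^{D+1}−1)θ·P) = exp(iθ·P)`. -/
theorem binary_angle_termination (n : ℕ) (P : Matrix (Fin n) (Fin n) ℂ)
    (hP : P * P = 1) (D : ℕ) (m : ℤ) :
    NormedSpace.exp
        ((-(Complex.I * ((2 ^ (D + 1) - 1 : ℂ) *
          (((2 * (m : ℝ) - 1) * Real.pi / 2 ^ D : ℝ) : ℂ)))) • P) =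
      NormedSpace.exp
        ((Complex.I * (((2 * (m : ℝ) - 1) * Real.pi / 2 ^ D : ℝ) : ℂ)) • P) := by
  set θ : ℝ := (2 * (m : ℝ) - 1) * Real.pi / 2 ^ D with hθ
  have h2 : ((2 : ℂ) ^ D) ≠ 0 := pow_ne_zero _ two_ne_zero
  have hzL : (-(Complex.I * ((2 ^ (D + 1) - 1 : ℂ) * (θ : ℂ))))
      = ((θ : ℂ) - ((2 * m - 1 : ℤ) : ℂ) * (2 * Real.pi)) * Complex.I := by
    have hθc : (θ : ℂ) = (2 * (m : ℂ) - 1) * (Real.pi : ℂ) / 2 ^ D := by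
      rw [hθ]; push_cast; ring
    rw [hθc]; push_cast
    field_simp
    ring
  have hzR : (Complex.I * (θ : ℂ)) = (θ : ℂ) * Complex.I := mul_comm _ _
  rw [hzL, hzR, exp_smul_involutive P hP, exp_smul_involutive P hP,
    Complex.cosh_mul_I, Complex.cosh_mul_I, Complex.sinh_mul_I, Complex.sinh_mul_I,
    Complex.cos_sub_int_mul_two_pi, Complex.sin_sub_int_mul_two_pi]
end
end
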